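/- For n ≥ 1, the probability that a uniformly random function f : Fin n → Fin n is a loop-rooted tree (has exactly one cyclic point) equals 1/n. -/

import Mathlib

set_option linter.unusedSectionVars false
open Function List

namespace Joyal

variable {α : Type*} [Fintype α] [LinearOrder α]

/-- `x` is a cyclic point of `f`. -/
def cyc (f : α → α) (x : α) : Prop := ∃ k, 1 ≤ k ∧ f^[k] x = x

lemma cyc_apply {f : α → α} {x : α} (h : cyc f x) : cyc f (f x) := by
  obtain ⟨k, hk, hfx⟩ := h
  exact ⟨k, hk, by rw [← iterate_succ_apply, iterate_succ_apply', hfx]⟩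

lemma cyc_iterate {f : α → α} {x : α} (h : cyc f x) (j : ℕ) : cyc f (f^[j] x) := by
  induction j with
  | zero => exact h
  | succ j ih => rw [iterate_succ_apply']; exact cyc_apply ih

lemma cyc_iterate_card (f : α → α) (x : α) : cyc f (f^[Fintype.card α] x) := by
  obtain ⟨i, j, hne, hij⟩ := Fintype.exists_ne_map_eq_of_card_lt
    (fun i : Fin (Fintype.card α + 1) => f^[i] x) (by simp)
  wlog hlt : (i : ℕ) < (j : ℕ) generalizing i j
  · exact this j i hne.symm hij.symm (by have := Fin.val_ne_of_ne hne; omega)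
  · have hc : cyc f (f^[(i:ℕ)] x) := by
      refine ⟨(j : ℕ) - i, by omega, ?_⟩
      rw [← iterate_add_apply]
      have : (j : ℕ) - i + i = j := by omega
      rw [this, ← hij]
    have : Fintype.card α = (Fintype.card α - i) + i := by omega
    rw [this, iterate_add_apply]
    exact cyc_iterate hc _

lemma cyc_injOn {f : α → α} {a b : α} (ha : cyc f a) (hb : cyc f b)
    (h : f a = f b) : a = b := by
  obtain ⟨k, hk, hka⟩ := ha
  obtain ⟨l, hl, hlb⟩ := hb
  have hka' : f^[k * l] a = a := by rw [iterate_mul]; exact Function.iterate_fixed hka l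
  have hlb' : f^[k * l] b = b := by rw [mul_comm, iterate_mul]; exact Function.iterate_fixed hlb k
  have hpos : 1 ≤ k * l := Nat.one_le_iff_ne_zero.mpr (by positivity)
  have h1 : k * l - 1 + 1 = k * l := by omega
  calc a = f^[k * l] a := hka'.symm
    _ = f^[k * l - 1 + 1] a := by rw [h1]
    _ = f^[k * l - 1] (f a) := by rw [iterate_succ_apply]
    _ = f^[k * l - 1] (f b) := by rw [h]
    _ = f^[k * l - 1 + 1] b := by rw [iterate_succ_apply]
    _ = f^[k * l] b := by rw [h1]
    _ = b := hlb'

/-- criterion for a unique cyclic point -/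
lemma existsUnique_cyc {f : α → α} {r : α} (hr : f r = r)
    (hreach : ∀ x, ∃ m, f^[m] x = r) : ∃! x, cyc f x := by
  refine ⟨r, ⟨1, le_refl 1, by simpa using hr⟩, ?_⟩
  rintro x ⟨k, hk, hkx⟩
  obtain ⟨m, hm⟩ := hreach x
  have key : ∀ j, f^[m + j] x = r := by
    intro j
    induction j with
    | zero => simpa using hm
    | succ j ih => rw [← Nat.add_assoc, iterate_succ_apply', ih, hr]
  have : f^[k * m] x = x := by rw [iterate_mul]; exact Function.iterate_fixed hkx m
  rcases Nat.eq_zero_or_pos m with h0 | h0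
  · rw [h0] at hm; simpa using hm
  · have : x = f^[m + (k * m - m)] x := by rw [Nat.add_sub_cancel' (Nat.le_mul_of_pos_left m hk)]; exact this.symm
    rw [key] at this; exact this

/-- follow the list `l`, stopping at its last element; elsewhere use `f`. -/
def chain (f : α → α) (l : List α) (x : α) : α :=
  if x ∈ l then l.getD (l.idxOf x + 1) x else f x

variable {f : α → α} {l : List α}

lemma chain_of_not_mem {x : α} (hx : x ∉ l) : chain f l x = f x := by
  simp [chain, hx]

lemma chain_getElem (hl : l.Nodup) {i : ℕ} (hi : i + 1 < l.length) :
    chain f l l[i] = l[i+1] := by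
  have hmem : l[i] ∈ l := List.getElem_mem _
  rw [chain, if_pos hmem, hl.idxOf_getElem i (by omega), List.getD_eq_getElem _ _ hi]

lemma chain_getElem_last (hl : l.Nodup) {i : ℕ} (hi1 : i < l.length) (hi2 : i + 1 = l.length) :
    chain f l l[i] = l[i] := by
  have hmem : l[i] ∈ l := List.getElem_mem _
  rw [chain, if_pos hmem, hl.idxOf_getElem i hi1, List.getD_eq_default _ _ (by omega)]

lemma chain_iterate (hl : l.Nodup) {i j : ℕ} (hij : i + j < l.length) :
    (chain f l)^[j] l[i] = l[i+j] := by
  induction j with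
  | zero => simp
  | succ j ih =>
      rw [iterate_succ_apply', ih (by omega), chain_getElem hl (by omega)]
      simp [Nat.add_assoc]

lemma chain_iterate_last (hl : l.Nodup) {i : ℕ} (hi : i < l.length) :
    (chain f l)^[l.length - 1 - i] l[i] = l[l.length - 1] := by
  have h : i + (l.length - 1 - i) = l.length - 1 := by omega
  rw [chain_iterate hl (by omega)]
  congr 1


lemma iterate_mem {f : α → α} {T : Finset α} (hmap : ∀ x ∈ T, f x ∈ T) :
    ∀ (j : ℕ) (x : α), x ∈ T → f^[j] x ∈ T := by
  intro j
  induction j with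
  | zero => simpa using fun x hx => hx
  | succ j ih => intro x hx; rw [iterate_succ_apply]; exact ih _ (hmap x hx)

lemma iterate_injOn {f : α → α} {T : Finset α} (hmap : ∀ x ∈ T, f x ∈ T)
    (hinj : ∀ x ∈ T, ∀ y ∈ T, f x = f y → x = y) :
    ∀ (j : ℕ) (x : α), x ∈ T → ∀ y ∈ T, f^[j] x = f^[j] y → x = y := by
  intro j
  induction j with
  | zero => simpa using fun x _ y _ h => h
  | succ j ih =>
      intro x hx y hy h
      rw [iterate_succ_apply, iterate_succ_apply] at h
      exact hinj x hx y hy (ih _ (hmap x hx) _ (hmap y hy) h)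

/-- every point of a finset mapped bijectively to itself is cyclic -/
lemma perm_cyc {f : α → α} {T : Finset α} (hmap : ∀ x ∈ T, f x ∈ T)
    (hinj : ∀ x ∈ T, ∀ y ∈ T, f x = f y → x = y) {x : α} (hx : x ∈ T) : cyc f x := by
  obtain ⟨i, j, hne, hij⟩ := Fintype.exists_ne_map_eq_of_card_lt
    (fun i : Fin (Fintype.card α + 1) => f^[i] x) (by simp)
  wlog hlt : (i : ℕ) < (j : ℕ) generalizing i j
  · exact this j i hne.symm hij.symm (by have := Fin.val_ne_of_ne hne; omega)
  refine ⟨(j : ℕ) - i, by omega, ?_⟩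
  have h2 : f^[(i:ℕ)] (f^[(j:ℕ) - i] x) = f^[(i:ℕ)] x := by
    rw [← iterate_add_apply]
    have : (i:ℕ) + ((j:ℕ) - i) = j := by omega
    rw [this, ← hij]
  exact iterate_injOn hmap hinj i _ (iterate_mem hmap _ _ hx) _ hx h2

/-- a cyclic point whose orbit hits a forward-closed finset lies in it -/
lemma cyc_mem_of_hit {f : α → α} {T : Finset α} (hmap : ∀ x ∈ T, f x ∈ T)
    {x : α} {t : ℕ} (ht : f^[t] x ∈ T) (hx : cyc f x) : x ∈ T := by
  obtain ⟨k, hk, hkx⟩ := hx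
  have h1 : f^[k * (t + 1)] x = x := by rw [iterate_mul]; exact Function.iterate_fixed hkx _
  have h3 : t + 1 ≤ k * (t + 1) := Nat.le_mul_of_pos_left _ hk
  have h2 : k * (t + 1) = (k * (t+1) - t) + t := by omega
  rw [← h1, h2, iterate_add_apply]
  exact iterate_mem hmap _ _ ht

lemma headI_eq_getElem [Inhabited α] : ∀ (l : List α) (h : 0 < l.length), l.headI = l[0]
  | _ :: _, _ => rfl


section Enc
variable [Inhabited α]

open scoped Classical in
noncomputable def cycS (f : α → α) : Finset α := Finset.univ.filter (cyc f)

lemma mem_cycS {f : α → α} {x : α} : x ∈ cycS f ↔ cyc f x := by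
  classical simp [cycS]

noncomputable def encA (f : α → α) : List α := ((cycS f).sort (· ≤ ·)).map f

lemma mem_encA {f : α → α} {x : α} : x ∈ encA f ↔ cyc f x := by
  simp only [encA, List.mem_map, Finset.mem_sort, mem_cycS]
  constructor
  · rintro ⟨y, hy, rfl⟩; exact cyc_apply hy
  · intro hx
    obtain ⟨k, hk, hkx⟩ := hx
    refine ⟨f^[k-1] x, cyc_iterate ⟨k, hk, hkx⟩ _, ?_⟩
    have h2 : f (f^[k-1] x) = f^[k-1+1] x := (iterate_succ_apply' f _ x).symm
    have h3 : k - 1 + 1 = k := by omega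
    rw [h2, h3, hkx]

lemma encA_nodup (f : α → α) : (encA f).Nodup := by
  refine List.Nodup.map_on ?_ (Finset.sort_nodup _ _)
  intro x hx y hy h
  exact cyc_injOn (mem_cycS.mp ((Finset.mem_sort _).mp hx))
    (mem_cycS.mp ((Finset.mem_sort _).mp hy)) h

lemma encA_length (f : α → α) : (encA f).length = (cycS f).card := by
  simp [encA]

lemma encA_ne_nil (f : α → α) : encA f ≠ [] := by
  have h : cyc f (f^[Fintype.card α] default) := cyc_iterate_card f default
  exact List.ne_nil_of_mem (mem_encA.mpr h)

lemma encA_length_pos (f : α → α) : 0 < (encA f).length :=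
  List.length_pos_iff.mpr (encA_ne_nil f)

noncomputable def encG (f : α → α) : α → α := chain f (encA f)
noncomputable def encM (f : α → α) : α := (encA f).headI
noncomputable def encR (f : α → α) : α := (encA f).getLast (encA_ne_nil f)

lemma encR_eq (f : α → α) : encR f = (encA f)[(encA f).length - 1]'(by
    have := encA_length_pos f; omega) :=
  List.getLast_eq_getElem _

lemma encG_fix (f : α → α) : encG f (encR f) = encR f := by
  rw [encR_eq]
  exact chain_getElem_last (encA_nodup f) _ (by have := encA_length_pos f; omega)

lemma encG_of_not_cyc {f : α → α} {x : α} (hx : ¬ cyc f x) : encG f x = f x :=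
  chain_of_not_mem (fun h => hx (mem_encA.mp h))

lemma reach_of_mem {f : α → α} {x : α} (hx : x ∈ encA f) :
    ∃ t, (encG f)^[t] x = encR f := by
  obtain ⟨i, hi, rfl⟩ := List.mem_iff_getElem.mp hx
  exact ⟨(encA f).length - 1 - i, by rw [encR_eq]; exact chain_iterate_last (encA_nodup f) hi⟩

lemma encG_reach (f : α → α) (x : α) : ∃ t, (encG f)^[t] x = encR f := by
  classical
  have hex : ∃ t, cyc f (f^[t] x) := ⟨Fintype.card α, cyc_iterate_card f x⟩
  set t := Nat.find hex with ht
  have hagree : ∀ j, j ≤ t → (encG f)^[j] x = f^[j] x := by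
    intro j hj
    induction j with
    | zero => rfl
    | succ j ih =>
        rw [iterate_succ_apply', iterate_succ_apply', ih (by omega),
          encG_of_not_cyc (Nat.find_min hex (by omega))]
  have h1 : (encG f)^[t] x ∈ encA f := by
    rw [hagree t le_rfl]; exact mem_encA.mpr (Nat.find_spec hex)
  obtain ⟨t', ht'⟩ := reach_of_mem h1
  exact ⟨t' + t, by rw [iterate_add_apply, ht']⟩

lemma encG_lrt (f : α → α) : ∃! x, cyc (encG f) x :=
  existsUnique_cyc (encG_fix f) (encG_reach f)

end Enc


section Dec
variable [Inhabited α]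

noncomputable def root (g : α → α) (hg : ∃! x, cyc g x) : α := hg.exists.choose

lemma root_cyc (g : α → α) (hg : ∃! x, cyc g x) : cyc g (root g hg) := hg.exists.choose_spec

lemma eq_root {g : α → α} (hg : ∃! x, cyc g x) {x : α} (hx : cyc g x) : x = root g hg :=
  hg.unique hx (root_cyc g hg)

lemma root_fix (g : α → α) (hg : ∃! x, cyc g x) : g (root g hg) = root g hg :=
  eq_root hg (cyc_apply (root_cyc g hg))

lemma iterate_card_eq_root (g : α → α) (hg : ∃! x, cyc g x) (x : α) :
    g^[Fintype.card α] x = root g hg :=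
  eq_root hg (cyc_iterate_card g x)

noncomputable def hitT (g : α → α) (hg : ∃! x, cyc g x) (m : α) : ℕ :=
  Nat.find (⟨Fintype.card α, iterate_card_eq_root g hg m⟩ : ∃ t, g^[t] m = root g hg)

lemma hitT_spec (g : α → α) (hg : ∃! x, cyc g x) (m : α) :
    g^[hitT g hg m] m = root g hg :=
  Nat.find_spec (⟨Fintype.card α, iterate_card_eq_root g hg m⟩ : ∃ t, g^[t] m = root g hg)

lemma hitT_min {g : α → α} {hg : ∃! x, cyc g x} {m : α} {j : ℕ} (hj : j < hitT g hg m) :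
    g^[j] m ≠ root g hg := Nat.find_min _ hj

noncomputable def orbitL (g : α → α) (hg : ∃! x, cyc g x) (m : α) : List α :=
  (List.range (hitT g hg m + 1)).map (fun i => g^[i] m)

lemma orbitL_length (g : α → α) (hg : ∃! x, cyc g x) (m : α) :
    (orbitL g hg m).length = hitT g hg m + 1 := by simp [orbitL]

lemma orbitL_getElem (g : α → α) (hg : ∃! x, cyc g x) (m : α) {i : ℕ}
    (hi : i < (orbitL g hg m).length) : (orbitL g hg m)[i] = g^[i] m := by
  simp only [orbitL, List.getElem_map, List.getElem_range]

lemma orbitL_nodup (g : α → α) (hg : ∃! x, cyc g x) (m : α) : (orbitL g hg m).Nodup := by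
  have aux : ∀ i j : ℕ, i < j → j ≤ hitT g hg m → g^[i] m ≠ g^[j] m := by
    intro i j hij hj h
    have hc : cyc g (g^[i] m) := ⟨j - i, by omega, by
      rw [← iterate_add_apply]
      have : j - i + i = j := by omega
      rw [this, ← h]⟩
    exact hitT_min (by omega) (eq_root hg hc)
  refine List.Nodup.map_on ?_ List.nodup_range
  intro i hi j hj h
  rcases lt_trichotomy i j with hlt | heq | hgt
  · exact absurd h (aux i j hlt (by simp at hj; omega))
  · exact heq
  · exact absurd h.symm (aux j i hgt (by simp at hi; omega))

lemma root_mem_orbitL (g : α → α) (hg : ∃! x, cyc g x) (m : α) :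
    root g hg ∈ orbitL g hg m := by
  have h : (orbitL g hg m)[hitT g hg m]'(by rw [orbitL_length]; omega) = root g hg := by
    rw [orbitL_getElem]; exact hitT_spec g hg m
  exact h ▸ List.getElem_mem _

noncomputable def decL (g : α → α) (hg : ∃! x, cyc g x) (m : α) : List α :=
  ((orbitL g hg m).toFinset).sort (· ≤ ·)

lemma decL_nodup (g : α → α) (hg : ∃! x, cyc g x) (m : α) : (decL g hg m).Nodup :=
  Finset.sort_nodup _ _

lemma mem_decL {g : α → α} {hg : ∃! x, cyc g x} {m x : α} :
    x ∈ decL g hg m ↔ x ∈ orbitL g hg m := by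
  simp [decL]

lemma decL_length (g : α → α) (hg : ∃! x, cyc g x) (m : α) :
    (decL g hg m).length = (orbitL g hg m).length := by
  rw [decL, Finset.length_sort, List.toFinset_card_of_nodup (orbitL_nodup g hg m)]

noncomputable def dec (g : α → α) (hg : ∃! x, cyc g x) (m : α) : α → α := fun x =>
  if x ∈ decL g hg m then (orbitL g hg m).getD ((decL g hg m).idxOf x) x else g x

lemma dec_of_mem {g : α → α} {hg : ∃! x, cyc g x} {m x : α} (hx : x ∈ decL g hg m) :
    dec g hg m x = (orbitL g hg m)[(decL g hg m).idxOf x]'(by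
      rw [← decL_length g hg m]; exact List.idxOf_lt_length_iff.mpr hx) := by
  rw [dec, if_pos hx, List.getD_eq_getElem]

lemma dec_of_not_mem {g : α → α} {hg : ∃! x, cyc g x} {m x : α} (hx : x ∉ decL g hg m) :
    dec g hg m x = g x := by
  rw [dec, if_neg hx]

lemma dec_getElem {g : α → α} {hg : ∃! x, cyc g x} {m : α} {i : ℕ}
    (hi : i < (decL g hg m).length) :
    dec g hg m ((decL g hg m)[i]) = (orbitL g hg m)[i]'(by rw [← decL_length g hg m]; exact hi) := by
  rw [dec_of_mem (List.getElem_mem hi)]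
  congr 1
  exact (decL_nodup g hg m).idxOf_getElem i hi

end Dec


section Inv
variable [Inhabited α]

lemma encM_eq (f : α → α) : encM f = (encA f)[0]'(encA_length_pos f) :=
  headI_eq_getElem _ (encA_length_pos f)

lemma root_encG (f : α → α) : root (encG f) (encG_lrt f) = encR f :=
  (eq_root (encG_lrt f) ⟨1, le_rfl, by simpa using encG_fix f⟩).symm

lemma hitT_encG (f : α → α) :
    hitT (encG f) (encG_lrt f) (encM f) = (encA f).length - 1 := by
  have hpos := encA_length_pos f
  rw [hitT, Nat.find_eq_iff]
  constructor
  · rw [root_encG, encM_eq, encR_eq]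
    have h0 : 0 + ((encA f).length - 1) < (encA f).length := by omega
    have := chain_iterate (f := f) (encA_nodup f) h0
    simpa [encG] using this
  · intro j hj hroot
    rw [root_encG, encM_eq, encR_eq, encG] at hroot
    rw [chain_iterate (f := f) (encA_nodup f) (by omega : 0 + j < (encA f).length)] at hroot
    have := ((encA_nodup f).getElem_inj_iff).mp hroot
    omega

lemma orbitL_encG (f : α → α) :
    orbitL (encG f) (encG_lrt f) (encM f) = encA f := by
  have hpos := encA_length_pos f
  refine List.ext_getElem ?_ ?_
  · rw [orbitL_length, hitT_encG]; omega
  · intro i h1 h2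
    rw [orbitL_getElem, encM_eq, encG,
      chain_iterate (f := f) (encA_nodup f) (by omega : 0 + i < (encA f).length)]
    simp

lemma encA_toFinset (f : α → α) : (encA f).toFinset = cycS f := by
  ext x; rw [List.mem_toFinset, mem_encA, mem_cycS]

lemma decL_encG (f : α → α) :
    decL (encG f) (encG_lrt f) (encM f) = (cycS f).sort (· ≤ ·) := by
  rw [decL, orbitL_encG, encA_toFinset]

/-- decoding after encoding gives back `f` -/
lemma dec_encG (f : α → α) : dec (encG f) (encG_lrt f) (encM f) = f := by
  funext x
  rw [dec, orbitL_encG, decL_encG]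
  by_cases hx : x ∈ (cycS f).sort (· ≤ ·)
  · rw [if_pos hx]
    have hidx : ((cycS f).sort (· ≤ ·)).idxOf x < ((cycS f).sort (· ≤ ·)).length :=
      List.idxOf_lt_length_iff.mpr hx
    have hlen : (encA f).length = ((cycS f).sort (· ≤ ·)).length := by
      simp [encA]
    rw [List.getD_eq_getElem _ _ (by omega)]
    simp only [encA, List.getElem_map]
    rw [List.getElem_idxOf hidx]
  · rw [if_neg hx]
    refine encG_of_not_cyc fun hc => hx ?_
    rw [Finset.mem_sort]; exact mem_cycS.mpr hc

end Inv


section Inv2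
variable [Inhabited α] {g : α → α} (hg : ∃! x, cyc g x) (m : α)

lemma dec_maps {x : α} (hx : x ∈ (orbitL g hg m).toFinset) :
    dec g hg m x ∈ (orbitL g hg m).toFinset := by
  rw [List.mem_toFinset] at hx ⊢
  rw [dec_of_mem (mem_decL.mpr hx)]
  exact List.getElem_mem _

lemma dec_inj {x y : α} (hx : x ∈ (orbitL g hg m).toFinset) (hy : y ∈ (orbitL g hg m).toFinset)
    (h : dec g hg m x = dec g hg m y) : x = y := by
  rw [List.mem_toFinset] at hx hy
  have hx' := mem_decL.mpr hx
  have hy' := mem_decL.mpr hy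
  rw [dec_of_mem hx', dec_of_mem hy'] at h
  have := ((orbitL_nodup g hg m).getElem_inj_iff).mp h
  calc x = (decL g hg m)[(decL g hg m).idxOf x]'(List.idxOf_lt_length_iff.mpr hx') :=
        (List.getElem_idxOf _).symm
    _ = (decL g hg m)[(decL g hg m).idxOf y]'(List.idxOf_lt_length_iff.mpr hy') := by
        congr 1
    _ = y := List.getElem_idxOf _

lemma dec_hit (x : α) : ∃ t, (dec g hg m)^[t] x ∈ (orbitL g hg m).toFinset := by
  classical
  have hex : ∃ t, g^[t] x ∈ (orbitL g hg m).toFinset :=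
    ⟨Fintype.card α, by
      rw [iterate_card_eq_root g hg, List.mem_toFinset]
      exact root_mem_orbitL g hg m⟩
  set t := Nat.find hex with ht
  have hagree : ∀ j, j ≤ t → (dec g hg m)^[j] x = g^[j] x := by
    intro j hj
    induction j with
    | zero => rfl
    | succ j ih =>
        rw [iterate_succ_apply', iterate_succ_apply', ih (by omega),
          dec_of_not_mem fun hmem => Nat.find_min hex (show j < t by omega)
            (List.mem_toFinset.mpr (mem_decL.mp hmem))]
  exact ⟨t, by rw [hagree t le_rfl]; exact Nat.find_spec hex⟩

lemma cycS_dec : cycS (dec g hg m) = (orbitL g hg m).toFinset := by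
  ext x
  rw [mem_cycS]
  constructor
  · intro hx
    obtain ⟨t, ht⟩ := dec_hit hg m x
    exact cyc_mem_of_hit (fun y hy => dec_maps hg m hy) ht hx
  · intro hx
    exact perm_cyc (fun y hy => dec_maps hg m hy) (fun a ha b hb => dec_inj hg m ha hb) hx

lemma encA_dec : encA (dec g hg m) = orbitL g hg m := by
  refine List.ext_getElem ?_ ?_
  · rw [encA, List.length_map, Finset.length_sort, cycS_dec,
      List.toFinset_card_of_nodup (orbitL_nodup g hg m)]
  · intro i h1 h2
    have hlen : (encA (dec g hg m)).length = (decL g hg m).length := by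
      rw [encA, List.length_map, Finset.length_sort, cycS_dec, decL, Finset.length_sort]
    simp only [encA, List.getElem_map]
    have : ((cycS (dec g hg m)).sort (· ≤ ·)) = decL g hg m := by rw [cycS_dec, decL]
    rw [List.getElem_of_eq this, dec_getElem]

lemma encG_dec : encG (dec g hg m) = g := by
  funext x
  rw [encG, encA_dec hg m]
  by_cases hx : x ∈ orbitL g hg m
  · obtain ⟨i, hi, rfl⟩ := List.mem_iff_getElem.mp hx
    rcases Nat.lt_or_ge (i + 1) (orbitL g hg m).length with hlt | hge
    · rw [chain_getElem (orbitL_nodup g hg m) hlt, orbitL_getElem g hg m,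
        orbitL_getElem g hg m, iterate_succ_apply']
    · have hi1 : i + 1 = (orbitL g hg m).length := by omega
      rw [chain_getElem_last (orbitL_nodup g hg m) hi hi1]
      have hihit : i = hitT g hg m := by
        have := orbitL_length g hg m; omega
      rw [orbitL_getElem g hg m, hihit, hitT_spec g hg m, root_fix g hg]
  · rw [chain_of_not_mem hx, dec_of_not_mem (fun h => hx (mem_decL.mp h))]

lemma encM_dec : encM (dec g hg m) = m := by
  have hpos : 0 < (encA (dec g hg m)).length := encA_length_pos _
  rw [encM, headI_eq_getElem _ hpos]
  have h0 : 0 < (orbitL g hg m).length := by rw [orbitL_length]; omega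
  rw [List.getElem_of_eq (encA_dec hg m), orbitL_getElem g hg m]
  rfl

end Inv2


section Count
variable (α) [Inhabited α]

noncomputable def joyalEquiv : ({f : α → α // ∃! x, cyc f x} × α) ≃ (α → α) where
  toFun p := dec p.1.1 p.1.2 p.2
  invFun f := (⟨encG f, encG_lrt f⟩, encM f)
  left_inv p := by
    obtain ⟨⟨g, hg⟩, m⟩ := p
    refine Prod.ext (Subtype.ext ?_) ?_
    · exact encG_dec hg m
    · exact encM_dec hg m
  right_inv f := dec_encG f

lemma card_eq :
    Nat.card {f : α → α // ∃! x, cyc f x} * Fintype.card α =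
      Fintype.card α ^ Fintype.card α := by
  have h := Nat.card_congr (joyalEquiv α)
  rw [Nat.card_prod] at h
  simpa [Nat.card_eq_fintype_card, Fintype.card_fun] using h

end Count

end Joyal

/-- The probability that a uniformly random function `f : Fin n → Fin n` is a
loop-rooted tree (has exactly one cyclic point) equals `1/n`, for `n ≥ 1`. -/
theorem stmt_1 (n : ℕ) (hn : 1 ≤ n) :
    (Nat.card {f : Fin n → Fin n // ∃! x : Fin n, ∃ k : ℕ, 1 ≤ k ∧ f^[k] x = x} : ℚ) /
      (Nat.card (Fin n → Fin n) : ℚ) = 1 / n := by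
  obtain ⟨N, rfl⟩ : ∃ N, n = N + 1 := ⟨n - 1, by omega⟩
  have key : Nat.card {f : Fin (N+1) → Fin (N+1) // ∃! x : Fin (N+1),
      ∃ k : ℕ, 1 ≤ k ∧ f^[k] x = x} * (N + 1) = (N + 1) ^ (N + 1) := by
    have h := Joyal.card_eq (Fin (N+1))
    rwa [Fintype.card_fin] at h
  have h1 : Nat.card (Fin (N+1) → Fin (N+1)) = (N+1)^(N+1) := by
    simp [Nat.card_eq_fintype_card, Fintype.card_fun]
  rw [h1]
  have hq : (Nat.card {f : Fin (N+1) → Fin (N+1) // ∃! x : Fin (N+1),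
      ∃ k : ℕ, 1 ≤ k ∧ f^[k] x = x} : ℚ) * (N + 1) = (N + 1) ^ (N + 1) := by
    exact_mod_cast congrArg (Nat.cast : ℕ → ℚ) key
  have hpos : (0:ℚ) < (N:ℚ) + 1 := by positivity
  rw [div_eq_div_iff (by positivity) (by push_cast; positivity)]
  push_cast at hq ⊢
  linarith
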